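/- Let d ≥ 1 be an integer and let h : ℕ → ℝ≥0 be a function whose support S = {m ∈ ℕ : h(m) > 0} contains a nonzero element, such that: (i) h(a) > 0 and h(b) > 0 imply h(a + b) > 0 (so the positive elements of S form an additive semigroup), and (ii) h(k + s) ≥ h(k) for every k ∈ ℕ and every s with h(s) > 0. Then for every positive integer q, limsup_{k→∞} d!·h(q·k)/k^d = q^d · limsup_{k→∞} d!·h(k)/k^d, both limsups taken in [0, ∞]. -/

import Mathlib

open Filter
open scoped ENNReal NNReal

theorem zero_volume_full_homogeneity (d : ℕ) (hd : 1 ≤ d) (h : ℕ → ℝ≥0)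
    (hS0 : ∃ m : ℕ, m ≠ 0 ∧ 0 < h m)
    (hadd : ∀ a b : ℕ, 0 < h a → 0 < h b → 0 < h (a + b))
    (hmono : ∀ k s : ℕ, 0 < h s → h k ≤ h (k + s))
    (q : ℕ) (hq : 0 < q) :
    limsup (fun k : ℕ =>
        (Nat.factorial d : ℝ≥0∞) * (h (q * k) : ℝ≥0∞) / (k : ℝ≥0∞) ^ d) atTop
      = (q : ℝ≥0∞) ^ d *
        limsup (fun k : ℕ =>
          (Nat.factorial d : ℝ≥0∞) * (h k : ℝ≥0∞) / (k : ℝ≥0∞) ^ d) atTop := by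
  classical
  obtain ⟨m₀, hm₀ne, hm₀⟩ := hS0
  set f : ℕ → ℝ≥0∞ := fun k => (Nat.factorial d : ℝ≥0∞) * (h k : ℝ≥0∞) / (k : ℝ≥0∞) ^ d
    with hf
  -- multiples of elements of the support stay in the support
  have hmul : ∀ n a : ℕ, 0 < n → 0 < h a → 0 < h (n * a) := by
    intro n
    induction n with
    | zero => intro a hn _; exact absurd hn (lt_irrefl 0)
    | succ n ih =>
      intro a _ ha
      rcases Nat.eq_zero_or_pos n with rfl | hn
      · simpa using ha
      · rw [Nat.succ_mul]
        exact hadd _ _ (ih a hn ha) ha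
  -- uniform bound for the correcting shift
  have hsel : ∃ C : ℕ, ∀ k : ℕ, 0 < h k → ∃ s : ℕ, s ≤ C ∧ 0 < h s ∧ q ∣ (k + s) := by
    refine ⟨Finset.sup (Finset.range q)
      (fun r => if hr : ∃ s, 0 < h s ∧ q ∣ (r + s) then Nat.find hr else 0), ?_⟩
    intro k hk
    -- existence of a shift for the residue class of k
    have hex : ∃ s, 0 < h s ∧ q ∣ (k % q + s) := by
      obtain ⟨e, rfl⟩ : ∃ e, q = e + 1 := ⟨q - 1, by omega⟩
      refine ⟨e * k + (e + 1) * m₀, ?_, ?_⟩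
      · have h1 : 0 < h ((e + 1) * m₀) := hmul (e + 1) m₀ (by omega) hm₀
        rcases Nat.eq_zero_or_pos (e * k) with h0 | hpos
        · rw [h0, zero_add]; exact h1
        · have he : 0 < e := by
            rcases Nat.eq_zero_or_pos e with rfl | he
            · simp at hpos
            · exact he
          have hkpos : 0 < k := by
            rcases Nat.eq_zero_or_pos k with rfl | hkpos
            · simp at hpos
            · exact hkpos
          exact hadd _ _ (hmul e k he hk) h1
      · obtain ⟨c, r, rfl, hr⟩ : ∃ c r, k = (e + 1) * c + r ∧ k % (e + 1) = r :=
          ⟨k / (e + 1), k % (e + 1), (Nat.div_add_mod k (e + 1)).symm, rfl⟩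
        rw [hr]
        exact ⟨r + e * c + m₀, by ring⟩
    refine ⟨Nat.find hex, ?_, (Nat.find_spec hex).1, ?_⟩
    · have hmem : k % q ∈ Finset.range q := Finset.mem_range.mpr (Nat.mod_lt k hq)
      have hle := Finset.le_sup
        (f := fun r => if hr : ∃ s, 0 < h s ∧ q ∣ (r + s) then Nat.find hr else 0) hmem
      exact le_trans (le_of_eq (dif_pos hex).symm) hle
    · have hkeq : k + Nat.find hex = q * (k / q) + (k % q + Nat.find hex) := by
        have := Nat.div_add_mod k q; omega
      rw [hkeq]
      exact dvd_add (dvd_mul_right q _) (Nat.find_spec hex).2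
  obtain ⟨C, hC⟩ := hsel
  -- the two limsups agree
  have hqd0 : ((q : ℝ≥0∞)) ^ d ≠ 0 :=
    pow_ne_zero d (Nat.cast_ne_zero.mpr hq.ne')
  have hqdtop : ((q : ℝ≥0∞)) ^ d ≠ ⊤ :=
    ENNReal.pow_ne_top (ENNReal.natCast_ne_top q)
  -- A ≤ L
  have hAL : limsup (fun m : ℕ => f (q * m)) atTop ≤ limsup f atTop := by
    have hcomp : (fun m : ℕ => f (q * m)) = f ∘ (fun m : ℕ => q * m) := rfl
    rw [hcomp, limsup_comp]
    refine limsup_le_limsup_of_le ?_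
    exact tendsto_atTop_mono (fun m => Nat.le_mul_of_pos_left m hq) tendsto_id
  -- L ≤ A
  have hLA : limsup f atTop ≤ limsup (fun m : ℕ => f (q * m)) atTop := by
    by_contra hcon
    push_neg at hcon
    obtain ⟨c, hAc, hcL⟩ := exists_between hcon
    have hcle : c ≤ limsup (fun m : ℕ => f (q * m)) atTop := by
      rcases eq_or_ne c 0 with rfl | hc0
      · exact zero_le
      obtain ⟨b, hcb, hbL⟩ := exists_between hcL
      have hbtop : b ≠ ⊤ := hbL.ne_top
      have hctop : c ≠ ⊤ := hcb.ne_top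
      have hb0 : b ≠ 0 := by
        intro hb; rw [hb] at hcb; exact absurd hcb (by simp)
      -- the eventual comparison of the weights
      have hev : ∀ᶠ k : ℕ in atTop, c * ((k : ℝ≥0∞) + C) ^ d ≤ b * (k : ℝ≥0∞) ^ d := by
        set cr : ℝ := c.toReal with hcr
        set br : ℝ := b.toReal with hbr
        have hcrpos : 0 < cr := ENNReal.toReal_pos hc0 hctop
        have hbrpos : 0 < br := ENNReal.toReal_pos hb0 hbtop
        have hcrbr : cr < br := ENNReal.toReal_lt_toReal hctop hbtop |>.mpr hcb
        have t1 : Tendsto (fun k : ℕ => (C : ℝ) / k) atTop (nhds 0) :=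
          tendsto_const_div_atTop_nhds_zero_nat (C : ℝ)
        have t2 : Tendsto (fun k : ℕ => 1 + (C : ℝ) / k) atTop (nhds 1) := by
          simpa using t1.const_add 1
        have t3 : Tendsto (fun k : ℕ => (1 + (C : ℝ) / k) ^ d) atTop (nhds 1) := by
          simpa using t2.pow d
        have hlt : ∀ᶠ k : ℕ in atTop, (1 + (C : ℝ) / k) ^ d < br / cr :=
          t3.eventually_lt_const ((one_lt_div hcrpos).mpr hcrbr)
        filter_upwards [hlt, eventually_ge_atTop 1] with k hk hk1
        have hk0 : (0 : ℝ) < k := by exact_mod_cast hk1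
        have heq : ((k : ℝ) + C) / k = 1 + (C : ℝ) / k := by field_simp
        have hratio : (((k : ℝ) + C) / k) ^ d < br / cr := by rw [heq]; exact hk
        have hreal : cr * ((k : ℝ) + C) ^ d ≤ br * (k : ℝ) ^ d := by
          have hkd : (0 : ℝ) < (k : ℝ) ^ d := by positivity
          rw [div_pow] at hratio
          rw [div_lt_div_iff₀ hkd hcrpos] at hratio
          nlinarith [hratio]
        have e1 : ((k : ℝ≥0∞) + C) = ENNReal.ofReal ((k : ℝ) + C) := by
          rw [ENNReal.ofReal_add (by positivity) (by positivity)]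
          simp [ENNReal.ofReal_natCast]
        have e2 : ((k : ℝ≥0∞)) = ENNReal.ofReal ((k : ℝ)) := by
          simp [ENNReal.ofReal_natCast]
        calc c * ((k : ℝ≥0∞) + C) ^ d
            = ENNReal.ofReal (cr * ((k : ℝ) + C) ^ d) := by
              rw [ENNReal.ofReal_mul hcrpos.le, ENNReal.ofReal_pow (by positivity), ← e1,
                hcr, ENNReal.ofReal_toReal hctop]
          _ ≤ ENNReal.ofReal (br * (k : ℝ) ^ d) := ENNReal.ofReal_le_ofReal hreal
          _ = b * ((k : ℝ≥0∞)) ^ d := by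
              rw [ENNReal.ofReal_mul hbrpos.le, ENNReal.ofReal_pow (by positivity), ← e2,
                hbr, ENNReal.ofReal_toReal hbtop]
      have hfreq : ∃ᶠ k : ℕ in atTop, b < f k :=
        frequently_lt_of_lt_limsup (by isBoundedDefault) hbL
      rw [eventually_atTop] at hev
      obtain ⟨K, hK⟩ := hev
      have hfreq2 : ∃ᶠ m : ℕ in atTop, c ≤ f (q * m) := by
        rw [frequently_atTop] at hfreq ⊢
        intro N
        obtain ⟨k, hkge, hbfk⟩ := hfreq (max (q * N) (max K 1))
        have hk1 : 1 ≤ k := le_trans (le_max_of_le_right (le_max_right K 1)) hkge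
        have hkK : K ≤ k := le_trans (le_max_of_le_right (le_max_left K 1)) hkge
        have hkqN : q * N ≤ k := le_trans (le_max_left _ _) hkge
        have hkpos : 0 < h k := by
          rcases eq_or_lt_of_le (show (0 : ℝ≥0) ≤ h k from zero_le) with h0 | hpos
          · exfalso
            have hfk : f k = 0 := by rw [hf]; simp [← h0]
            rw [hfk] at hbfk
            exact absurd hbfk (by simp)
          · exact hpos
        obtain ⟨s, hsC, hs, hdvd⟩ := hC k hkpos
        set m : ℕ := (k + s) / q with hm
        have hqm : q * m = k + s := Nat.mul_div_cancel' hdvd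
        refine ⟨m, ?_, ?_⟩
        · -- N ≤ m
          calc N = q * N / q := by rw [Nat.mul_div_cancel_left _ hq]
            _ ≤ (k + s) / q := Nat.div_le_div_right (by omega)
            _ = m := hm.symm
        · -- c ≤ f (q * m)
          have hden0 : (((q * m : ℕ) : ℝ≥0∞)) ^ d ≠ 0 :=
            pow_ne_zero d (Nat.cast_ne_zero.mpr (by omega))
          show c ≤ (Nat.factorial d : ℝ≥0∞) * (h (q * m) : ℝ≥0∞)
              / (((q * m : ℕ)) : ℝ≥0∞) ^ d
          rw [ENNReal.le_div_iff_mul_le (Or.inl hden0)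
            (Or.inl (ENNReal.pow_ne_top (ENNReal.natCast_ne_top _)))]
          have hkd0 : ((k : ℝ≥0∞)) ^ d ≠ 0 :=
            pow_ne_zero d (Nat.cast_ne_zero.mpr (by omega))
          have hkdtop : ((k : ℝ≥0∞)) ^ d ≠ ⊤ :=
            ENNReal.pow_ne_top (ENNReal.natCast_ne_top _)
          have step1 : c * (((q * m : ℕ) : ℝ≥0∞)) ^ d ≤ c * ((k : ℝ≥0∞) + C) ^ d := by
            refine mul_le_mul_right (pow_le_pow_left' ?_ d) c
            rw [hqm]
            push_cast
            exact add_le_add_right (by exact_mod_cast hsC) _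
          have step2 : c * ((k : ℝ≥0∞) + C) ^ d ≤ b * ((k : ℝ≥0∞)) ^ d := hK k hkK
          have step3 : b * ((k : ℝ≥0∞)) ^ d ≤ (Nat.factorial d : ℝ≥0∞) * (h k : ℝ≥0∞) := by
            have : b ≤ (Nat.factorial d : ℝ≥0∞) * (h k : ℝ≥0∞) / ((k : ℝ≥0∞)) ^ d :=
              le_of_lt hbfk
            calc b * ((k : ℝ≥0∞)) ^ d
                ≤ ((Nat.factorial d : ℝ≥0∞) * (h k : ℝ≥0∞) / ((k : ℝ≥0∞)) ^ d)
                    * ((k : ℝ≥0∞)) ^ d := mul_le_mul_left this _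
              _ = (Nat.factorial d : ℝ≥0∞) * (h k : ℝ≥0∞) :=
                  ENNReal.div_mul_cancel hkd0 hkdtop
          have step4 : (Nat.factorial d : ℝ≥0∞) * (h k : ℝ≥0∞)
              ≤ (Nat.factorial d : ℝ≥0∞) * (h (q * m) : ℝ≥0∞) := by
            refine mul_le_mul_right ?_ _
            rw [hqm]
            exact_mod_cast hmono k s hs
          exact le_trans (le_trans step1 (le_trans step2 step3)) step4
      exact le_limsup_of_frequently_le hfreq2 (by isBoundedDefault)
    exact absurd (lt_of_le_of_lt hcle hAc) (lt_irrefl _)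
  -- pointwise identification of the left-hand side
  have hcongr : ∀ᶠ k : ℕ in atTop,
      (Nat.factorial d : ℝ≥0∞) * (h (q * k) : ℝ≥0∞) / (k : ℝ≥0∞) ^ d
        = (q : ℝ≥0∞) ^ d * f (q * k) := by
    filter_upwards [eventually_ge_atTop 1] with k hk1
    show (Nat.factorial d : ℝ≥0∞) * (h (q * k) : ℝ≥0∞) / (k : ℝ≥0∞) ^ d
        = (q : ℝ≥0∞) ^ d * ((Nat.factorial d : ℝ≥0∞) * (h (q * k) : ℝ≥0∞)
            / (((q * k : ℕ)) : ℝ≥0∞) ^ d)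
    have hcast : (((q * k : ℕ)) : ℝ≥0∞) = (q : ℝ≥0∞) * (k : ℝ≥0∞) := by push_cast; ring
    rw [hcast, mul_pow, ← mul_div_assoc, ENNReal.mul_div_mul_left _ _ hqd0 hqdtop]
  calc limsup (fun k : ℕ =>
        (Nat.factorial d : ℝ≥0∞) * (h (q * k) : ℝ≥0∞) / (k : ℝ≥0∞) ^ d) atTop
      = limsup (fun k : ℕ => (q : ℝ≥0∞) ^ d * f (q * k)) atTop := limsup_congr hcongr
    _ = (q : ℝ≥0∞) ^ d * limsup (fun k : ℕ => f (q * k)) atTop :=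
        ENNReal.limsup_const_mul_of_ne_top hqdtop
    _ = (q : ℝ≥0∞) ^ d * limsup f atTop := by rw [le_antisymm hAL hLA]
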